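/- Let f and g be transcendental entire functions such that the set of critical points of f∘g is bounded. Suppose moreover that f permutes with its derivative, i.e. f∘f' = f'∘f, and that 0 is a fixed point of f, i.e. f(0) = 0. Then every critical value of f is a Picard exceptional value of g, i.e. for every critical value w of f, the preimage set {z ∈ ℂ : g(z) = w} is finite. -/

import Mathlib

open Filter Topology Bornology

/-- A function is entire if it is complex-differentiable on all of ℂ. -/
def Entire (f : ℂ → ℂ) : Prop := Differentiable ℂ f

/-- A transcendental entire function: entire and not a polynomial. -/
def TranscendentalEntire (f : ℂ → ℂ) : Prop :=
  Differentiable ℂ f ∧ ¬ ∃ p : Polynomial ℂ, ∀ z : ℂ, f z = p.eval z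

/-- The set of asymptotic values of `f`: `w` is an asymptotic value if there is a
curve `γ : ℝ → ℂ` tending to ∞ along which `f` tends to `w`. -/
def AV (f : ℂ → ℂ) : Set ℂ :=
  {w : ℂ | ∃ γ : ℝ → ℂ, Tendsto (fun t => ‖γ t‖) atTop atTop ∧
      Tendsto (fun t => f (γ t)) atTop (𝓝 w)}

/-- The set of critical points of `f`: points where the derivative vanishes. -/
def CP (f : ℂ → ℂ) : Set ℂ := {z : ℂ | deriv f z = 0}

/-- The set of critical values of `f`: images of critical points. -/
def CV (f : ℂ → ℂ) : Set ℂ := {w : ℂ | ∃ z : ℂ, deriv f z = 0 ∧ f z = w}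

theorem stmt_12 (f g : ℂ → ℂ)
    (hf : TranscendentalEntire f) (hg : TranscendentalEntire g)
    (hb : IsBounded (CP (f ∘ g)))
    (hperm : f ∘ deriv f = deriv f ∘ f)
    (hfix : f 0 = 0) :
    ∀ w ∈ CV f, {z : ℂ | g z = w}.Finite := by
  rintro w ⟨c, hc, hw⟩
  -- f'(w) = 0
  have hfw : deriv f w = 0 := by
    have := congrFun hperm c
    simp only [Function.comp_apply, hc, hfix, hw] at this
    exact this.symm
  -- preimage is a subset of CP (f ∘ g)
  set S : Set ℂ := {z : ℂ | g z = w} with hS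
  have hsub : S ⊆ CP (f ∘ g) := by
    intro z hz
    have : deriv (f ∘ g) z = deriv f (g z) * deriv g z :=
      deriv_comp z (hf.1.differentiableAt) (hg.1.differentiableAt)
    simp only [CP, Set.mem_setOf_eq, this, hz, hfw, zero_mul]
    rw [Set.mem_setOf_eq] at hz
    rw [hz, hfw, zero_mul]
  have hSb : IsBounded S := hb.subset hsub
  -- S is closed
  have hScl : IsClosed S := isClosed_eq hg.1.continuous continuous_const
  have hScompact : IsCompact (closure S) := hSb.isCompact_closure
  by_contra hinf
  replace hinf : S.Infinite := hinf
  obtain ⟨x, _, hx⟩ := hinf.exists_accPt_of_subset_isCompact hScompact subset_closure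
  have hfreq : ∃ᶠ z in 𝓝[≠] x, g z = w := by
    have h1 := accPt_iff_frequently.mp hx
    rw [frequently_nhdsWithin_iff]
    exact h1.mono fun z hz => ⟨hz.2, hz.1⟩
  have hgan : AnalyticOnNhd ℂ g Set.univ := Complex.analyticOnNhd_univ_iff_differentiable.mpr hg.1
  have heq : Set.EqOn g (fun _ => w) Set.univ :=
    hgan.eqOn_of_preconnected_of_frequently_eq (analyticOnNhd_const)
      isPreconnected_univ (Set.mem_univ x) hfreq
  exact hg.2 ⟨Polynomial.C w, fun z => by simpa using heq (Set.mem_univ z)⟩
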